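/- Let g : ℕ → ℂ and suppose the power series G(z) = ∑_{n≥0} g(n) z^n has positive radius of convergence and that there exist a finite set S of roots of unity and a function analytic on ℂ \ S that agrees with the sum of G on some neighborhood of 0. Then there is a natural number N ≥ 1 such that for every j with 0 ≤ j < N there exists a function analytic on ℂ \ {1} that agrees with the sum of the power series G_j(z) = ∑_{n≥0} g(Nn+j) z^n on some neighborhood of 0. -/

import Mathlib

open Complex Finset

private lemma aux_analyticAt_of_hasSum (a : ℕ → ℂ) (f : ℂ → ℂ) (r : ℝ) (hr : 0 < r)
    (hf : ∀ w : ℂ, ‖w‖ < r → HasSum (fun n => a n * w ^ n) (f w)) :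
    AnalyticAt ℂ f 0 := by
  set p : FormalMultilinearSeries ℂ ℂ ℂ :=
    fun n => ContinuousMultilinearMap.mkPiRing ℂ (Fin n) (a n) with hp
  have hps : ∀ w : ℂ, ‖w‖ < r → HasSum (fun n => p n fun _ => w) (f w) := by
    intro w hw
    have := hf w hw
    simpa [hp, ContinuousMultilinearMap.mkPiRing_apply, smul_eq_mul, mul_comm] using this
  have hwlt : ‖((r / 2 : ℝ) : ℂ)‖ < r := by
    rw [Complex.norm_real, Real.norm_eq_abs, abs_of_pos (by positivity)]
    linarith
  have hsummable : Summable fun n => ‖a n‖ * (r / 2) ^ n := by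
    have h1 : Summable fun n => ‖a n * ((r / 2 : ℝ) : ℂ) ^ n‖ :=
      ((hps ((r / 2 : ℝ) : ℂ) hwlt).summable.congr
        (fun n => by
          simp [hp, ContinuousMultilinearMap.mkPiRing_apply, smul_eq_mul, mul_comm, div_pow])).norm
    apply h1.congr
    intro n
    rw [norm_mul, norm_pow, Complex.norm_real, Real.norm_eq_abs, abs_of_pos (by positivity)]
  set s : NNReal := ⟨r / 2, by positivity⟩ with hs
  have hsum' : Summable fun n => ‖p n‖ * (s : ℝ) ^ n := by
    apply hsummable.congr
    intro n
    rw [hp]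
    rw [ContinuousMultilinearMap.norm_mkPiRing]
    rfl
  have hball : HasFPowerSeriesOnBall f p 0 s := by
    refine ⟨p.le_radius_of_summable hsum', ?_, ?_⟩
    · exact_mod_cast (show (0 : NNReal) < s by
        rw [← NNReal.coe_lt_coe]
        show (0:ℝ) < r / 2
        positivity)
    · intro y hy
      have hy2 : (‖y‖₊ : ENNReal) < (s : ENNReal) := by
        rw [EMetric.mem_ball, edist_zero_right] at hy
        exact_mod_cast hy
      have hy' : ‖y‖ < r / 2 := by
        have hy3 : ‖y‖₊ < s := ENNReal.coe_lt_coe.mp hy2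
        exact_mod_cast hy3
      rw [zero_add]
      exact hps y (by linarith)
  exact hball.analyticAt

/-- Suppose `G(z) = ∑_{n≥0} g(n) zⁿ` has positive radius of convergence and
extends to a function analytic off a finite set `S` of roots of unity. Then there is
`N ≥ 1` such that for each `0 ≤ j < N`, the section `G_j(z) = ∑_{n≥0} g(Nn+j) zⁿ` extends
to a function analytic off `{1}`. -/
theorem sections_singular_only_at_one
    (g : ℕ → ℂ) (S : Finset ℂ)
    (hS : ∀ ζ ∈ S, ∃ m : ℕ, 1 ≤ m ∧ ζ ^ m = 1)
    (h : ℂ → ℂ)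
    (hanalytic : ∀ z : ℂ, z ∉ (S : Set ℂ) → AnalyticAt ℂ h z)
    (hagree : ∃ r : ℝ, 0 < r ∧ ∀ z : ℂ, ‖z‖ < r →
      HasSum (fun n : ℕ => g n * z ^ n) (h z)) :
    ∃ N : ℕ, 1 ≤ N ∧ ∀ j : ℕ, j < N →
      ∃ hj : ℂ → ℂ, (∀ z : ℂ, z ≠ 1 → AnalyticAt ℂ hj z) ∧
        ∃ r : ℝ, 0 < r ∧ ∀ z : ℂ, ‖z‖ < r →
          HasSum (fun n : ℕ => g (N * n + j) * z ^ n) (hj z) := by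
  obtain ⟨r, hr, hsum⟩ := hagree
  choose! m hm1 hm2 using hS
  set N : ℕ := ∏ ζ ∈ S, m ζ with hNdef
  have hN1 : 1 ≤ N := Finset.one_le_prod' fun ζ hζ => hm1 ζ hζ
  have hN0 : N ≠ 0 := by omega
  haveI : NeZero N := ⟨hN0⟩
  have hNc : (N : ℂ) ≠ 0 := Nat.cast_ne_zero.mpr hN0
  have hSN : ∀ ζ ∈ S, ζ ^ N = 1 := by
    intro ζ hζ
    obtain ⟨c, hc⟩ := Finset.dvd_prod_of_mem m hζ
    calc ζ ^ N = (ζ ^ m ζ) ^ c := by rw [← pow_mul, ← hc, hNdef]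
    _ = 1 := by rw [hm2 ζ hζ, one_pow]
  set ω : ℂ := Complex.exp (2 * Real.pi * Complex.I / N) with hωdef
  have hωprim : IsPrimitiveRoot ω N := Complex.isPrimitiveRoot_exp N hN0
  have hωN : ω ^ N = 1 := hωprim.pow_eq_one
  have hω0 : ω ≠ 0 := by
    intro h0
    rw [h0, zero_pow hN0] at hωN
    exact zero_ne_one hωN
  have hωabs : ∀ k : ℕ, ‖ω ^ k‖ = 1 := by
    intro k
    rw [norm_pow, Complex.norm_eq_one_of_pow_eq_one hωN hN0, one_pow]
  -- zpow congruence mod N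
  have hzeq : ∀ x y : ℤ, (N : ℤ) ∣ (x - y) → ω ^ x = ω ^ y := by
    intro x y hxy
    have h1 : ω ^ (x - y) = 1 := (hωprim.zpow_eq_one_iff_dvd _).mpr hxy
    rw [zpow_sub₀ hω0, div_eq_one_iff_eq (zpow_ne_zero _ hω0)] at h1
    exact h1
  have hzeq' : ∀ (c : ℤ) (a : ℕ), ω ^ (c * ((a % N : ℕ) : ℤ)) = ω ^ (c * (a : ℤ)) := by
    intro c a
    apply hzeq
    refine ⟨-(c * ((a / N : ℕ) : ℤ)), ?_⟩
    have h1 : (N : ℤ) * ((a / N : ℕ) : ℤ) + ((a % N : ℕ) : ℤ) = (a : ℤ) := by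
      exact_mod_cast Nat.div_add_mod a N
    rw [← h1]; ring
  -- roots of unity filter
  have hA : ∀ d : ℤ, (∑ k : Fin N, ω ^ (d * (k.val : ℤ))) = if (N : ℤ) ∣ d then (N : ℂ) else 0 := by
    intro d
    by_cases hd : (N : ℤ) ∣ d
    · rw [if_pos hd]
      have h1 : ∀ k : Fin N, ω ^ (d * (k.val : ℤ)) = 1 := fun k =>
        (hωprim.zpow_eq_one_iff_dvd _).mpr (hd.mul_right _)
      simp [h1]
    · rw [if_neg hd]
      have hx1 : ω ^ d ≠ 1 := fun hh => hd ((hωprim.zpow_eq_one_iff_dvd d).mp hh)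
      have hxN : (ω ^ d) ^ N = 1 := by
        rw [← zpow_natCast (ω ^ d) N, ← zpow_mul, mul_comm, zpow_mul, zpow_natCast, hωN, one_zpow]
      calc (∑ k : Fin N, ω ^ (d * (k.val : ℤ)))
          = ∑ k ∈ Finset.range N, (ω ^ d) ^ k := by
            rw [← Fin.sum_univ_eq_sum_range (fun i : ℕ => (ω ^ d) ^ i) N]
            apply Finset.sum_congr rfl
            intro k _
            rw [← zpow_natCast (ω ^ d) k.val, ← zpow_mul]
        _ = 0 := by rw [geom_sum_eq hx1, hxN, sub_self, zero_div]
  -- from here on, fixed j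
  refine ⟨N, hN1, ?_⟩
  intro j hjN
  set F : ℂ → ℂ := fun z =>
    (N : ℂ)⁻¹ * (z ^ j)⁻¹ * ∑ k : Fin N, ω ^ (-(j : ℤ) * (k.val : ℤ)) * h (ω ^ k.val * z)
    with hFdef
  -- F is analytic away from 0 and N-th roots of 1
  have hFanalytic : ∀ z : ℂ, z ≠ 0 → z ^ N ≠ 1 → AnalyticAt ℂ F z := by
    intro z hz hzN
    apply AnalyticAt.mul
    · exact analyticAt_const.mul ((analyticAt_id.pow j).inv (pow_ne_zero j hz))
    · apply Finset.analyticAt_fun_sum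
      intro k _
      apply analyticAt_const.mul
      have hmem : ω ^ k.val * z ∉ (S : Set ℂ) := by
        intro hmemS
        have h1 : (ω ^ k.val * z) ^ N = 1 := hSN _ hmemS
        rw [mul_pow, ← pow_mul, mul_comm k.val N, pow_mul, hωN, one_pow, one_mul] at h1
        exact hzN h1
      exact (hanalytic _ hmem).comp (analyticAt_const.mul analyticAt_id)
  -- invariance of F under change of N-th root
  have hFinv : ∀ u v : ℂ, u ≠ 0 → v ≠ 0 → u ^ N = v ^ N → F u = F v := by
    intro u v hu hv huv
    obtain ⟨l, hlN, hl⟩ := hωprim.eq_pow_of_pow_eq_one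
      (ξ := u / v) (by rw [div_pow, huv, div_self (pow_ne_zero _ hv)])
    have hueq : u = ω ^ l * v := by rw [hl, div_mul_cancel₀ _ hv]
    set t : ℕ → ℂ := fun a => ω ^ (-(j : ℤ) * (a : ℤ)) * h (ω ^ a * v) with htdef
    have claim2 : ∀ a : ℕ, t (a % N) = t a := by
      intro a
      simp only [htdef]
      rw [hzeq' (-(j : ℤ)) a, ← pow_eq_pow_mod a hωN]
    have claim1 : ∀ k : Fin N,
        ((ω ^ l) ^ j)⁻¹ * (ω ^ (-(j : ℤ) * (k.val : ℤ)) * h (ω ^ k.val * (ω ^ l * v)))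
          = t (k.val + l) := by
      intro k
      have e1 : ω ^ k.val * (ω ^ l * v) = ω ^ (k.val + l) * v := by rw [pow_add]; ring
      have e2 : ((ω ^ l) ^ j)⁻¹ = ω ^ (-((j : ℤ) * (l : ℤ))) := by
        rw [← pow_mul, ← zpow_natCast ω (l * j), ← zpow_neg]
        congr 1
        push_cast
        ring
      rw [e1, e2, ← mul_assoc, ← zpow_add₀ hω0]
      show _ = ω ^ (-(j : ℤ) * ((k.val + l : ℕ) : ℤ)) * h (ω ^ (k.val + l) * v)
      congr 2
      push_cast
      ring
    have claim3 : (∑ k : Fin N, t (k.val + l)) = ∑ k : Fin N, t k.val := by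
      have hlf : l < N := hlN
      set lf : Fin N := ⟨l, hlf⟩ with hlfdef
      calc (∑ k : Fin N, t (k.val + l))
          = ∑ k : Fin N, t ((k + lf).val) := by
            apply Finset.sum_congr rfl
            intro k _
            rw [Fin.val_add]
            exact (claim2 _).symm
        _ = ∑ k : Fin N, t k.val := Fintype.sum_equiv (Equiv.addRight lf)
            (fun k => t ((k + lf).val)) (fun k => t k.val) (fun k => rfl)
    rw [hueq]
    simp only [hFdef]
    have e3 : (((ω ^ l) ^ j)⁻¹) *
        (∑ k : Fin N, ω ^ (-(j : ℤ) * (k.val : ℤ)) * h (ω ^ k.val * (ω ^ l * v)))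
          = ∑ k : Fin N, t (k.val + l) := by
      rw [Finset.mul_sum]
      exact Finset.sum_congr rfl fun k _ => claim1 k
    calc (N : ℂ)⁻¹ * ((ω ^ l * v) ^ j)⁻¹ *
        ∑ k : Fin N, ω ^ (-(j : ℤ) * (k.val : ℤ)) * h (ω ^ k.val * (ω ^ l * v))
        = (N : ℂ)⁻¹ * (v ^ j)⁻¹ * ((((ω ^ l) ^ j)⁻¹) *
            ∑ k : Fin N, ω ^ (-(j : ℤ) * (k.val : ℤ)) * h (ω ^ k.val * (ω ^ l * v))) := by
          rw [mul_pow, mul_inv]; ring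
      _ = (N : ℂ)⁻¹ * (v ^ j)⁻¹ * ∑ k : Fin N, t (k.val + l) := by rw [e3]
      _ = (N : ℂ)⁻¹ * (v ^ j)⁻¹ * ∑ k : Fin N, t k.val := by rw [claim3]
      _ = (N : ℂ)⁻¹ * (v ^ j)⁻¹ *
            ∑ k : Fin N, ω ^ (-(j : ℤ) * (k.val : ℤ)) * h (ω ^ k.val * v) := rfl
  -- the series identity for F
  have hB : ∀ z : ℂ, z ≠ 0 → ‖z‖ < r →
      HasSum (fun n : ℕ => g (N * n + j) * (z ^ N) ^ n) (F z) := by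
    intro z hz hzr
    have hzj : z ^ j ≠ 0 := pow_ne_zero _ hz
    have hk : ∀ k : Fin N, HasSum
        (fun n : ℕ => ((N : ℂ)⁻¹ * (z ^ j)⁻¹ * ω ^ (-(j : ℤ) * (k.val : ℤ))) *
          (g n * (ω ^ k.val * z) ^ n))
        (((N : ℂ)⁻¹ * (z ^ j)⁻¹ * ω ^ (-(j : ℤ) * (k.val : ℤ))) * h (ω ^ k.val * z)) := by
      intro k
      apply HasSum.mul_left
      apply hsum
      rw [norm_mul, hωabs, one_mul]
      exact hzr
    have hFz : F z = ∑ k : Fin N,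
        ((N : ℂ)⁻¹ * (z ^ j)⁻¹ * ω ^ (-(j : ℤ) * (k.val : ℤ))) * h (ω ^ k.val * z) := by
      simp only [hFdef]
      rw [Finset.mul_sum]
      exact Finset.sum_congr rfl fun k _ => by ring
    have hsum1 : HasSum
        (fun n : ℕ => ∑ k : Fin N, ((N : ℂ)⁻¹ * (z ^ j)⁻¹ * ω ^ (-(j : ℤ) * (k.val : ℤ))) *
          (g n * (ω ^ k.val * z) ^ n)) (F z) := by
      rw [hFz]
      exact hasSum_sum fun k _ => hk k
    have step1 : ∀ n : ℕ,
        (∑ k : Fin N, ((N : ℂ)⁻¹ * (z ^ j)⁻¹ * ω ^ (-(j : ℤ) * (k.val : ℤ))) *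
          (g n * (ω ^ k.val * z) ^ n))
        = (N : ℂ)⁻¹ * (z ^ j)⁻¹ * g n * z ^ n *
            (∑ k : Fin N, ω ^ (((n : ℤ) - j) * (k.val : ℤ))) := by
      intro n
      rw [Finset.mul_sum]
      apply Finset.sum_congr rfl
      intro k _
      have e1 : (ω ^ k.val * z) ^ n = ω ^ (k.val * n) * z ^ n := by
        rw [mul_pow, ← pow_mul]
      have e2 : ω ^ (-(j : ℤ) * (k.val : ℤ)) * ω ^ ((k.val * n : ℕ) : ℤ)
          = ω ^ (((n : ℤ) - j) * (k.val : ℤ)) := by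
        rw [← zpow_add₀ hω0]
        congr 1
        push_cast
        ring
      rw [e1, show ω ^ (k.val * n) = ω ^ ((k.val * n : ℕ) : ℤ) from (zpow_natCast _ _).symm,
        ← e2]
      ring
    have heq : (fun n : ℕ => ∑ k : Fin N,
          ((N : ℂ)⁻¹ * (z ^ j)⁻¹ * ω ^ (-(j : ℤ) * (k.val : ℤ))) * (g n * (ω ^ k.val * z) ^ n))
        = fun n : ℕ => if (N : ℤ) ∣ ((n : ℤ) - j) then (z ^ j)⁻¹ * g n * z ^ n else 0 := by
      funext n
      rw [step1 n, hA ((n : ℤ) - (j : ℤ))]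
      by_cases hd : (N : ℤ) ∣ ((n : ℤ) - j)
      · rw [if_pos hd, if_pos hd]
        field_simp
      · rw [if_neg hd, if_neg hd, mul_zero]
    rw [heq] at hsum1
    have hinj : Function.Injective (fun mm : ℕ => N * mm + j) := by
      intro a b hab
      simp only at hab
      have : N * a = N * b := by omega
      exact Nat.eq_of_mul_eq_mul_left (by omega) this
    have hvan : ∀ n : ℕ, n ∉ Set.range (fun mm : ℕ => N * mm + j) →
        (if (N : ℤ) ∣ ((n : ℤ) - j) then (z ^ j)⁻¹ * g n * z ^ n else 0) = 0 := by
      intro n hn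
      rw [if_neg]
      intro hd
      obtain ⟨d, hdd⟩ := hd
      apply hn
      have hd0 : 0 ≤ d := by
        by_contra hneg
        push_neg at hneg
        have h1 : (N : ℤ) * d ≤ (N : ℤ) * (-1) := by
          apply mul_le_mul_of_nonneg_left (by omega) (by positivity)
        have hjN' : (j : ℤ) < N := by exact_mod_cast hjN
        have h2 : -(N : ℤ) < (n : ℤ) - j := by
          have : (0 : ℤ) ≤ n := Int.natCast_nonneg n
          omega
        linarith [hdd, h1, h2]
      refine ⟨d.toNat, ?_⟩
      show N * d.toNat + j = n
      have hdt : (d.toNat : ℤ) = d := Int.toNat_of_nonneg hd0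
      have h3 : (n : ℤ) = (N : ℤ) * (d.toNat : ℤ) + j := by
        rw [hdt]; linarith [hdd]
      exact_mod_cast h3.symm
    have hfin := (Function.Injective.hasSum_iff hinj hvan).mpr hsum1
    have heq2 : ((fun n : ℕ => if (N : ℤ) ∣ ((n : ℤ) - j) then (z ^ j)⁻¹ * g n * z ^ n else 0)
          ∘ (fun mm : ℕ => N * mm + j))
        = fun mm : ℕ => g (N * mm + j) * (z ^ N) ^ mm := by
      funext mm
      simp only [Function.comp]
      rw [if_pos ⟨(mm : ℤ), by push_cast; ring⟩,
        show z ^ (N * mm + j) = (z ^ N) ^ mm * z ^ j by rw [pow_add, pow_mul]]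
      field_simp
    rw [heq2] at hfin
    exact hfin
  -- roots
  have hroot : ∀ w : ℂ, w ≠ 0 → (w ^ ((N : ℂ)⁻¹)) ≠ 0 ∧ (w ^ ((N : ℂ)⁻¹)) ^ N = w := by
    intro w hw
    rw [Complex.cpow_def_of_ne_zero hw]
    refine ⟨Complex.exp_ne_zero _, ?_⟩
    rw [← Complex.exp_nat_mul,
      show (N : ℂ) * (Complex.log w * (N : ℂ)⁻¹) = Complex.log w by field_simp]
    exact Complex.exp_log hw
  -- the radius for the section
  set r1 : ℝ := min r 1 with hr1def
  have hr1 : 0 < r1 := lt_min hr one_pos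
  have hr1le : r1 ≤ r := min_le_left _ _
  set r2 : ℝ := r1 ^ N with hr2def
  have hr2 : 0 < r2 := pow_pos hr1 N
  set hjf : ℂ → ℂ := fun w => if w = 0 then g j else F (w ^ ((N : ℂ)⁻¹)) with hjfdef
  have hHS : ∀ w : ℂ, ‖w‖ < r2 → HasSum (fun n : ℕ => g (N * n + j) * w ^ n) (hjf w) := by
    intro w hw
    by_cases hw0 : w = 0
    · have h0 : HasSum (fun n : ℕ => g (N * n + j) * w ^ n) (g (N * 0 + j) * w ^ 0) :=
        hasSum_single 0 (fun b hb => by rw [hw0]; simp [zero_pow hb])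
      simpa [hjfdef, hw0] using h0
    · have hzn := hroot w hw0
      have hz0 : (w ^ ((N : ℂ)⁻¹)) ≠ 0 := hzn.1
      have hzw : (w ^ ((N : ℂ)⁻¹)) ^ N = w := hzn.2
      have hzr : ‖w ^ ((N : ℂ)⁻¹)‖ < r := by
        have h1 : ‖w ^ ((N : ℂ)⁻¹)‖ ^ N = ‖w‖ := by rw [← norm_pow, hzw]
        by_contra hcon
        push_neg at hcon
        have h2 : r1 ≤ ‖w ^ ((N : ℂ)⁻¹)‖ := le_trans hr1le hcon
        have h3 : r1 ^ N ≤ ‖w ^ ((N : ℂ)⁻¹)‖ ^ N := pow_le_pow_left₀ (le_of_lt hr1) h2 N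
        rw [h1] at h3
        exact absurd hw (not_lt.mpr h3)
      have hBz := hB _ hz0 hzr
      rw [hzw] at hBz
      simpa [hjfdef, if_neg hw0] using hBz
  refine ⟨hjf, ?_, r2, hr2, hHS⟩
  intro w₀ hw1
  by_cases hw0 : w₀ = 0
  · subst hw0
    exact aux_analyticAt_of_hasSum _ hjf r2 hr2 hHS
  · have hz0 : (w₀ ^ ((N : ℂ)⁻¹)) ≠ 0 := (hroot w₀ hw0).1
    have hz0N : (w₀ ^ ((N : ℂ)⁻¹)) ^ N = w₀ := (hroot w₀ hw0).2
    set z₀ : ℂ := w₀ ^ ((N : ℂ)⁻¹) with hz0def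
    set σ : ℂ → ℂ := fun w => z₀ * Complex.exp ((N : ℂ)⁻¹ * Complex.log (w / w₀)) with hσdef
    have hσa : AnalyticAt ℂ σ w₀ := by
      apply analyticAt_const.mul
      apply AnalyticAt.cexp
      apply analyticAt_const.mul
      apply AnalyticAt.clog
      · exact analyticAt_id.div analyticAt_const hw0
      · show w₀ / w₀ ∈ Complex.slitPlane
        rw [div_self hw0]
        exact Complex.one_mem_slitPlane
    have hσw : ∀ w : ℂ, w ≠ 0 → σ w ≠ 0 ∧ (σ w) ^ N = w := by
      intro w hw
      refine ⟨mul_ne_zero hz0 (Complex.exp_ne_zero _), ?_⟩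
      simp only [hσdef]
      rw [mul_pow, hz0N, ← Complex.exp_nat_mul,
        show (N : ℂ) * ((N : ℂ)⁻¹ * Complex.log (w / w₀)) = Complex.log (w / w₀) by field_simp,
        Complex.exp_log (div_ne_zero hw hw0)]
      field_simp
    have hσ0 : σ w₀ = z₀ := by
      simp only [hσdef]
      rw [div_self hw0, Complex.log_one, mul_zero, Complex.exp_zero, mul_one]
    have hFz₀ : AnalyticAt ℂ F (σ w₀) := by
      rw [hσ0]
      exact hFanalytic z₀ hz0 (by rw [hz0N]; exact hw1)
    have hcomp : AnalyticAt ℂ (fun w => F (σ w)) w₀ := hFz₀.comp hσa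
    have hev : hjf =ᶠ[nhds w₀] fun w => F (σ w) := by
      filter_upwards [eventually_ne_nhds hw0] with w hwne
      simp only [hjfdef, if_neg hwne]
      exact hFinv _ _ (hroot w hwne).1 (hσw w hwne).1
        (by rw [(hroot w hwne).2, (hσw w hwne).2])
    exact hcomp.congr hev.symm
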